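/- arXiv:1307.3883 — 5 statements merged into one kernel-verified Lean document; each statement's English description precedes it below -/
import Mathlib

section
/- Let V be a nontrivial complex inner product space and K : V → V a conjugate-linear isometry such that K ∘ K = c • id for some scalar c ∈ ℂ. Then c = 1 or c = −1. -/
/-- Wigner's dichotomy: if a conjugate-linear isometry on a nontrivial complex inner
product space squares to a scalar `c • id`, then `c = 1` or `c = -1`. -/
theorem antiunitary_square_scalar_pm_one
    {V : Type*} [NormedAddCommGroup V] [InnerProductSpace ℂ V] [Nontrivial V]
    (K : V → V)
    (hKadd : ∀ x y : V, K (x + y) = K x + K y)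
    (hKsmul : ∀ (c : ℂ) (x : V), K (c • x) = (starRingEnd ℂ c) • K x)
    (hKnorm : ∀ x : V, ‖K x‖ = ‖x‖)
    (hKsurj : Function.Surjective K)
    (c : ℂ) (hKK : ∀ v : V, K (K v) = c • v) :
    c = 1 ∨ c = -1 := by
  obtain ⟨v, hv⟩ := exists_ne (0 : V)
  -- ‖c‖ = 1
  have hnorm : ‖c‖ = 1 := by
    have h1 : ‖K (K v)‖ = ‖v‖ := by rw [hKnorm, hKnorm]
    rw [hKK, norm_smul] at h1
    have hv' : ‖v‖ ≠ 0 := norm_ne_zero_iff.mpr hv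
    field_simp at h1
    exact h1
  -- c is real
  have hreal : (starRingEnd ℂ) c = c := by
    have key : ∀ w : V, (starRingEnd ℂ c) • w = c • w := by
      intro w
      obtain ⟨u, rfl⟩ := hKsurj w
      have h1 : K (K (K u)) = (starRingEnd ℂ c) • K u := by
        rw [hKK u, hKsmul]
      have h2 : K (K (K u)) = c • K u := hKK (K u)
      rw [h1] at h2
      exact h2
    have := key v
    have hsub : ((starRingEnd ℂ) c - c) • v = 0 := by
      rw [sub_smul, this, sub_self]
    rcases smul_eq_zero.mp hsub with h | h
    · exact sub_eq_zero.mp h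
    · exact absurd h hv
  have him : c.im = 0 := by
    have := Complex.conj_eq_iff_im.mp hreal
    exact this
  have habs : c.re = 1 ∨ c.re = -1 := by
    have : ‖c‖ = 1 := hnorm
    rw [Complex.norm_def, Complex.normSq_apply, him] at this
    have h2 : c.re * c.re = 1 := by
      nlinarith [Real.sq_sqrt (by nlinarith : (0:ℝ) ≤ c.re * c.re + 0 * 0)]
    rcases mul_self_eq_one_iff.mp h2 with h | h
    · exact Or.inl h
    · exact Or.inr h
  rcases habs with h | h
  · left; exact Complex.ext h him
  · right; exact Complex.ext (by simp [h]) (by simp [him])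
end

section
/- Let V be a finite-dimensional complex inner product space, H : V → V a symmetric linear operator (⟪H x, y⟫ = ⟪x, H y⟫ for all x, y), and K : V → V a conjugate-linear isometry with K ∘ K = −id and K ∘ H = H ∘ K. Then for every λ ∈ ℝ the eigenspace {v : H v = λ • v} has even (complex) dimension. -/
open scoped ComplexConjugate

/-- A nondegenerate alternating bilinear form on a finite-dimensional complex vector
space forces the dimension to be even. -/
lemma even_finrank_of_alt_nondeg {W : Type*} [AddCommGroup W] [Module ℂ W]
    [FiniteDimensional ℂ W] (B : LinearMap.BilinForm ℂ W)
    (halt : ∀ x, B x x = 0) (hnd : B.Nondegenerate) :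
    Even (Module.finrank ℂ W) := by
  rcases Nat.even_or_odd (Module.finrank ℂ W) with h | h
  · exact h
  exfalso
  have hskew : ∀ x y, B x y = - B y x := by
    intro x y
    have h0 := halt (x + y)
    simp only [map_add, LinearMap.add_apply, halt x, halt y] at h0
    linear_combination h0
  let b := Module.finBasis ℂ W
  set M := LinearMap.BilinForm.toMatrix b B with hM
  have hdet : M.det ≠ 0 := (LinearMap.BilinForm.nondegenerate_iff_det_ne_zero b).mp hnd
  have hT : M.transpose = -M := by
    ext i j
    simp only [Matrix.transpose_apply, Matrix.neg_apply, hM, LinearMap.BilinForm.toMatrix_apply]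
    exact hskew (b j) (b i)
  have : M.det = - M.det := by
    calc M.det = M.transpose.det := (Matrix.det_transpose M).symm
    _ = (-M).det := by rw [hT]
    _ = (-1) ^ (Module.finrank ℂ W) * M.det := by
        rw [Matrix.det_neg, Fintype.card_fin]
    _ = - M.det := by rw [Odd.neg_one_pow h]; ring
  exact hdet (by linear_combination this / 2)

/-- Kramers degeneracy: if a symmetric Hamiltonian `H` on a finite-dimensional complex
inner product space commutes with a conjugate-linear isometry `K` with `K ∘ K = -id`,
then every eigenspace of `H` (for a real eigenvalue) has even complex dimension. -/
theorem kramers_degeneracy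
    {V : Type*} [NormedAddCommGroup V] [InnerProductSpace ℂ V] [FiniteDimensional ℂ V]
    (H : V →ₗ[ℂ] V)
    (hH : ∀ x y : V, (inner ℂ (H x) y : ℂ) = inner ℂ x (H y))
    (K : V → V)
    (hKadd : ∀ x y : V, K (x + y) = K x + K y)
    (hKsmul : ∀ (c : ℂ) (x : V), K (c • x) = (starRingEnd ℂ c) • K x)
    (hKnorm : ∀ x : V, ‖K x‖ = ‖x‖)
    (hKsurj : Function.Surjective K)
    (hKK : ∀ v : V, K (K v) = -v)
    (hKH : ∀ x : V, K (H x) = H (K x)) :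
    ∀ lam : ℝ,
      Even (Module.finrank ℂ (Module.End.eigenspace (H : Module.End ℂ V) (lam : ℂ))) := by
  intro lam
  set E := Module.End.eigenspace (H : Module.End ℂ V) (lam : ℂ) with hE
  have hKneg : ∀ x : V, K (-x) = - K x := by
    intro x
    have := hKsmul (-1) x
    simpa using this
  -- K is antiunitary: ⟪K a, K b⟫ = ⟪b, a⟫
  have hKsub : ∀ a c : V, ‖K a - K c‖ = ‖a - c‖ := by
    intro a c
    rw [sub_eq_add_neg, ← hKneg, ← hKadd, hKnorm, ← sub_eq_add_neg]
  -- K is antiunitary: ⟪K a, K b⟫ = ⟪b, a⟫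
  have hKinner : ∀ a b : V, (inner ℂ (K a) (K b) : ℂ) = inner ℂ b a := by
    intro a b
    have hI : Complex.I • K b = - K (Complex.I • b) := by
      rw [hKsmul]; simp [Complex.conj_I, neg_smul]
    have h1 : ‖K a + K b‖ = ‖a + b‖ := by rw [← hKadd, hKnorm]
    have h2 : ‖K a - K b‖ = ‖a - b‖ := hKsub a b
    have h3 : ‖K a - Complex.I • K b‖ = ‖a + Complex.I • b‖ := by
      rw [hI, sub_neg_eq_add, ← hKadd, hKnorm]
    have h4 : ‖K a + Complex.I • K b‖ = ‖a - Complex.I • b‖ := by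
      rw [hI, ← sub_eq_add_neg, hKsub]
    rw [inner_eq_sum_norm_sq_div_four, inner_eq_sum_norm_sq_div_four (𝕜 := ℂ) b a]
    have hIK : (RCLike.I : ℂ) = Complex.I := rfl
    rw [hIK, h1, h2, h3, h4]
    have e1 : ‖b + a‖ = ‖a + b‖ := by rw [add_comm]
    have e2 : ‖b - a‖ = ‖a - b‖ := norm_sub_rev b a
    have e3 : ‖b - Complex.I • a‖ = ‖a + Complex.I • b‖ := by
      have h : a + Complex.I • b = Complex.I • (b - Complex.I • a) := by
        rw [smul_sub, smul_smul, Complex.I_mul_I, neg_one_smul, sub_neg_eq_add, add_comm]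
      rw [h, norm_smul, Complex.norm_I, one_mul]
    have e4 : ‖b + Complex.I • a‖ = ‖a - Complex.I • b‖ := by
      have h : a - Complex.I • b = (-Complex.I) • (b + Complex.I • a) := by
        rw [smul_add, smul_smul, neg_mul, Complex.I_mul_I, neg_neg, one_smul, neg_smul,
          sub_eq_add_neg, add_comm]
      rw [h, norm_smul]
      simp
    rw [e1, e2, e3, e4]
  -- K preserves the eigenspace
  have hKE : ∀ v : V, v ∈ E → K v ∈ E := by
    intro v hv
    rw [hE, Module.End.mem_eigenspace_iff] at hv ⊢
    calc H (K v) = K (H v) := (hKH v).symm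
      _ = K ((lam : ℂ) • v) := by rw [hv]
      _ = conj (lam : ℂ) • K v := hKsmul _ _
      _ = (lam : ℂ) • K v := by rw [Complex.conj_ofReal]
  -- the symplectic form on E
  let B : LinearMap.BilinForm ℂ E := LinearMap.mk₂ ℂ
    (fun x y => (inner ℂ (K x.1) y.1 : ℂ))
    (fun x y z => by simp [hKadd, inner_add_left])
    (fun c x y => by simp [hKsmul, inner_smul_left, smul_eq_mul, mul_comm])
    (fun x y z => by simp [inner_add_right])
    (fun c x y => by simp [inner_smul_right, smul_eq_mul])
  have halt : ∀ x : E, B x x = 0 := by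
    intro x
    have h1 : (inner ℂ (K x.1) (K (K x.1)) : ℂ) = inner ℂ (K x.1) x.1 := hKinner x.1 (K x.1)
    rw [hKK] at h1
    rw [inner_neg_right] at h1
    have hBx : B x x = (inner ℂ (K x.1) x.1 : ℂ) := rfl
    rw [hBx]
    linear_combination (-1/2 : ℂ) * h1
  have hnd : B.Nondegenerate := by
    refine (LinearMap.IsRefl.nondegenerate_iff_separatingLeft (LinearMap.IsAlt.isRefl halt)).mpr ?_
    intro x hx
    have h0 := hx ⟨K x.1, hKE x.1 x.2⟩
    have h1 : (inner ℂ (K x.1) (K x.1) : ℂ) = 0 := h0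
    rw [inner_self_eq_zero] at h1
    have : ‖(x : V)‖ = 0 := by rw [← hKnorm, h1, norm_zero]
    exact Subtype.ext (norm_eq_zero.mp this)
  exact even_finrank_of_alt_nondeg B halt hnd
end

section
/- Let M be a group, G ⊆ M a finite subgroup, a ∈ M with a g a⁻¹ ∈ G for all g ∈ G and a² ∈ G, and χ a one-dimensional unitary character of G. Then Σ_{g ∈ G} χ((a g)²) ∈ {|G|, −|G|, 0}; i.e., every one-dimensional representation follows exactly one of the cases (a), (b), (c) with respect to the magnetic group G + aG. -/
/-- Every one-dimensional unitary character `χ` of the unitary subgroup `G` of a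
magnetic group `G + aG` follows exactly one of Wigner's cases (a), (b), (c):
the Wigner sum `Σ_{g ∈ G} χ((a g)²)` equals `|G|`, `-|G|`, or `0`. -/
theorem wigner_sum_trichotomy
    {M : Type*} [Group M] (G : Subgroup M) [Fintype G]
    (a : M) (ha : ∀ g ∈ G, a * g * a⁻¹ ∈ G) (ha2 : a ^ 2 ∈ G)
    (χ : M → ℂ)
    (hχmul : ∀ g ∈ G, ∀ h ∈ G, χ (g * h) = χ g * χ h)
    (hχabs : ∀ g ∈ G, ‖χ g‖ = 1) :
    ∑ g : G, χ ((a * (g : M)) ^ 2) ∈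
      ({(Fintype.card G : ℂ), -(Fintype.card G : ℂ), 0} : Set ℂ) := by
  set c : ℂ := χ (a ^ 2) with hc
  set φ : G → ℂ := fun g => χ (a * g * a⁻¹) * χ g with hφ
  have key : ∀ g : G, χ ((a * (g : M)) ^ 2) = c * φ g := by
    intro g
    have h1 : (a * (g : M)) ^ 2 = (a * g * a⁻¹) * (a ^ 2 * g) := by rw [sq]; group
    rw [h1, hχmul _ (ha g g.2) _ (mul_mem ha2 g.2), hχmul _ ha2 _ g.2]
    simp only [hφ]; ring
  have hφmul : ∀ g h : G, φ (g * h) = φ g * φ h := by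
    intro g h
    have h1 : a * ((g : M) * h) * a⁻¹ = (a * g * a⁻¹) * (a * h * a⁻¹) := by group
    simp only [hφ, Subgroup.coe_mul, h1,
      hχmul _ (ha g g.2) _ (ha h h.2), hχmul _ g.2 _ h.2]
    ring
  have hsum : ∑ g : G, χ ((a * (g : M)) ^ 2) = c * ∑ g : G, φ g := by
    rw [Finset.mul_sum]; exact Finset.sum_congr rfl fun g _ => key g
  simp only [Set.mem_insert_iff, Set.mem_singleton_iff]
  by_cases htriv : ∀ g : G, φ g = 1
  · have hc2 : c * c = 1 := by
      have h2 := htriv ⟨a ^ 2, ha2⟩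
      simp only [hφ] at h2
      rwa [show a * a ^ 2 * a⁻¹ = a ^ 2 by group, ← hc] at h2
    have hsum1 : ∑ g : G, φ g = (Fintype.card G : ℂ) := by
      simp [htriv]
    rw [hsum, hsum1]
    rcases mul_self_eq_one_iff.mp hc2 with h | h
    · left; rw [h, one_mul]
    · right; left; rw [h]; ring
  · push_neg at htriv
    obtain ⟨h, hh⟩ := htriv
    have h0 : ∑ g : G, φ g = 0 := by
      have hre : ∑ g : G, φ (h * g) = ∑ g : G, φ g :=
        Fintype.sum_equiv (Equiv.mulLeft h) _ _ (fun g => rfl)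
      have : φ h * ∑ g : G, φ g = ∑ g : G, φ g := by
        rw [Finset.mul_sum]
        rw [← hre]
        exact Finset.sum_congr rfl fun g _ => (hφmul h g).symm
      have h3 : (φ h - 1) * ∑ g : G, φ g = 0 := by rw [sub_mul, one_mul, this, sub_self]
      rcases mul_eq_zero.mp h3 with h4 | h4
      · exact absurd (sub_eq_zero.mp h4) hh
      · exact h4
    right; right
    rw [hsum, h0, mul_zero]
end

section
/- Let M be a group, G ⊆ M a finite subgroup, a ∈ M with a g a⁻¹ ∈ G for all g ∈ G and a² ∈ G, and χ a one-dimensional unitary character of G. Then there exists a function d : M → ℂ with |d(m)| = 1 for all m ∈ G ∪ aG, d(g) = χ(g) for all g ∈ G, and satisfying the corepresentation multiplication rule d(m₁ m₂) = d(m₁) · d(m₂) whenever m₁ ∈ G, m₂ ∈ G ∪ aG, and d(m₁ m₂) = d(m₁) · conj(d(m₂)) whenever m₁ ∈ aG, m₂ ∈ G ∪ aG, if and only if χ(a g a⁻¹) = χ(g)⁻¹ for all g ∈ G and χ(a²) = 1. -/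
/-- A one-dimensional unitary character `χ` of the unitary subgroup `G` extends to a
one-dimensional corepresentation `d` of the magnetic group `G + aG` (multiplying
ordinarily after unitary elements and with conjugation of the second factor after
antiunitary elements) if and only if `χ(a g a⁻¹) = χ(g)⁻¹` for all `g ∈ G` and
`χ(a²) = 1`, i.e. exactly when `χ` follows case (a). -/
theorem one_dim_corepresentation_extension_iff
    {M : Type*} [Group M] (G : Subgroup M) [Fintype G]
    (a : M) (ha : ∀ g ∈ G, a * g * a⁻¹ ∈ G) (ha2 : a ^ 2 ∈ G)
    (χ : M → ℂ)
    (hχmul : ∀ g ∈ G, ∀ h ∈ G, χ (g * h) = χ g * χ h)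
    (hχabs : ∀ g ∈ G, ‖χ g‖ = 1) :
    (∃ d : M → ℂ,
        (∀ m ∈ (↑G ∪ (fun g => a * g) '' ↑G : Set M), ‖d m‖ = 1) ∧
        (∀ g ∈ G, d g = χ g) ∧
        (∀ m₁ ∈ G, ∀ m₂ ∈ (↑G ∪ (fun g => a * g) '' ↑G : Set M),
            d (m₁ * m₂) = d m₁ * d m₂) ∧
        (∀ m₁ ∈ (fun g => a * g) '' (↑G : Set M),
            ∀ m₂ ∈ (↑G ∪ (fun g => a * g) '' ↑G : Set M),
            d (m₁ * m₂) = d m₁ * (starRingEnd ℂ) (d m₂))) ↔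
      ((∀ g ∈ G, χ (a * g * a⁻¹) = (χ g)⁻¹) ∧ χ (a ^ 2) = 1) := by
  classical
  have hχne : ∀ g ∈ G, χ g ≠ 0 := by
    intro g hg h0
    have := hχabs g hg
    rw [h0] at this
    simp at this
  have hχ1 : χ 1 = 1 := by
    have h := hχmul 1 G.one_mem 1 G.one_mem
    rw [one_mul] at h
    have := hχne 1 G.one_mem
    field_simp at h
    exact h.symm
  have hconj : ∀ g ∈ G, (starRingEnd ℂ) (χ g) = (χ g)⁻¹ := by
    intro g hg
    have h1 : χ g * (starRingEnd ℂ) (χ g) = 1 := by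
      rw [Complex.mul_conj]
      norm_cast
      rw [← Complex.sq_norm, hχabs g hg]
      norm_num
    exact eq_inv_of_mul_eq_one_right h1
  have hconjG : ∀ g ∈ G, a⁻¹ * g * a ∈ G := by
    intro g hg
    have hf : Function.Injective (fun x : G => (⟨a * x * a⁻¹, ha x x.2⟩ : G)) := by
      intro x y hxy
      simp only [Subtype.mk.injEq] at hxy
      ext
      exact mul_left_cancel (mul_right_cancel hxy)
    have hs := Finite.injective_iff_surjective.mp hf
    obtain ⟨x, hx⟩ := hs ⟨g, hg⟩
    have hxv : a * (x : M) * a⁻¹ = g := congrArg Subtype.val hx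
    have : (a⁻¹ * g * a : M) = x := by rw [← hxv]; group
    rw [this]; exact x.2
  constructor
  · rintro ⟨d, habs, hG, h1, h2⟩
    have haU : a ∈ (↑G ∪ (fun g => a * g) '' ↑G : Set M) :=
      Or.inr ⟨1, G.one_mem, by simp⟩
    have haI : a ∈ (fun g => a * g) '' (↑G : Set M) := ⟨1, G.one_mem, by simp⟩
    have hda : d a * (starRingEnd ℂ) (d a) = 1 := by
      rw [Complex.mul_conj]
      norm_cast
      rw [← Complex.sq_norm, habs a haU]
      norm_num
    have hsq : χ (a ^ 2) = 1 := by
      have h := h2 a haI a haU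
      rw [← hG _ ha2, pow_two, h, hda]
    refine ⟨?_, hsq⟩
    intro g hg
    have hag : d (a * g) = d a * (starRingEnd ℂ) (χ g) := by
      have h := h2 a haI g (Or.inl hg)
      rw [hG g hg] at h
      exact h
    have e1 : d (a * g * a) = (starRingEnd ℂ) (χ g) := by
      rw [h2 (a * g) ⟨g, hg, rfl⟩ a haU, hag]
      calc d a * (starRingEnd ℂ) (χ g) * (starRingEnd ℂ) (d a)
          = d a * (starRingEnd ℂ) (d a) * (starRingEnd ℂ) (χ g) := by ring
        _ = (starRingEnd ℂ) (χ g) := by rw [hda, one_mul]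
    have e2 : d (a * g * a) = χ (a * g * a⁻¹) := by
      have hrw : a * g * a = (a * g * a⁻¹) * a ^ 2 := by group
      rw [hrw, h1 _ (ha g hg) _ (Or.inl ha2), hG _ (ha g hg), hG _ ha2, hsq, mul_one]
    rw [← e2, e1, hconj g hg]
  · rintro ⟨hc, hsq⟩
    have hcinv : ∀ g ∈ G, χ (a⁻¹ * g * a) = (χ g)⁻¹ := by
      intro g hg
      have h := hc (a⁻¹ * g * a) (hconjG g hg)
      have hrw : a * (a⁻¹ * g * a) * a⁻¹ = g := by group
      rw [hrw] at h
      rw [← inv_inv (χ (a⁻¹ * g * a)), ← h]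
    by_cases haG : a ∈ G
    · have hreal : ∀ g ∈ G, (starRingEnd ℂ) (χ g) = χ g := by
        intro g hg
        have h1 := hc g hg
        have h2 : χ (a * g * a⁻¹) = χ g := by
          rw [hχmul (a * g) (G.mul_mem haG hg) a⁻¹ (G.inv_mem haG),
            hχmul a haG g hg]
          have hinv : χ a * χ a⁻¹ = 1 := by
            rw [← hχmul a haG a⁻¹ (G.inv_mem haG)]
            simp [hχ1]
          calc χ a * χ g * χ a⁻¹ = χ g * (χ a * χ a⁻¹) := by ring
            _ = χ g := by rw [hinv, mul_one]
        rw [hconj g hg, ← h1, h2]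
      have hsub : ∀ m ∈ (↑G ∪ (fun g => a * g) '' ↑G : Set M), m ∈ G := by
        rintro m (hm | ⟨g, hg, rfl⟩)
        · exact hm
        · exact G.mul_mem haG hg
      refine ⟨χ, fun m hm => hχabs m (hsub m hm), fun g _ => rfl,
        fun m₁ h₁ m₂ h₂ => hχmul m₁ h₁ m₂ (hsub m₂ h₂), ?_⟩
      rintro m₁ ⟨g, hg, rfl⟩ m₂ h₂
      have hm₂ := hsub m₂ h₂
      rw [hχmul _ (G.mul_mem haG hg) _ hm₂, hreal m₂ hm₂]
    · set d : M → ℂ := fun m => if m ∈ G then χ m else (starRingEnd ℂ) (χ (a⁻¹ * m))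
        with hd
      have hdG : ∀ g ∈ G, d g = χ g := fun g hg => if_pos hg
      have hdaG : ∀ g ∈ G, d (a * g) = (starRingEnd ℂ) (χ g) := by
        intro g hg
        have hnm : a * g ∉ G := by
          intro h
          exact haG (by simpa using G.mul_mem h (G.inv_mem hg))
        rw [hd]
        simp only [hnm, if_false, inv_mul_cancel_left]
      refine ⟨d, ?_, hdG, ?_, ?_⟩
      · rintro m (hm | ⟨g, hg, rfl⟩)
        · rw [hdG m hm]; exact hχabs m hm
        · rw [hdaG g hg, Complex.norm_conj]; exact hχabs g hg
      · rintro m₁ h₁ m₂ (h₂ | ⟨h, hh, rfl⟩)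
        · rw [hdG _ (G.mul_mem h₁ h₂), hdG _ h₁, hdG _ h₂, hχmul _ h₁ _ h₂]
        · have hrw : m₁ * (a * h) = a * ((a⁻¹ * m₁ * a) * h) := by group
          rw [hrw, hdaG _ (G.mul_mem (hconjG _ h₁) hh), hdG _ h₁, hdaG _ hh,
            hχmul _ (hconjG _ h₁) _ hh, map_mul, hcinv _ h₁, map_inv₀,
            hconj _ h₁, inv_inv]
      · rintro m₁ ⟨g, hg, rfl⟩ m₂ (h₂ | ⟨h, hh, rfl⟩)
        · have hrw : a * g * m₂ = a * (g * m₂) := by group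
          rw [hrw, hdaG _ (G.mul_mem hg h₂), hdaG _ hg, hdG _ h₂,
            hχmul _ hg _ h₂, map_mul]
        · have hmem : a * g * (a * h) ∈ G := by
            have : a * g * (a * h) = (a * g * a⁻¹) * a ^ 2 * h := by group
            rw [this]
            exact G.mul_mem (G.mul_mem (ha g hg) ha2) hh
          have hrw : a * g * (a * h) = (a * g * a⁻¹) * a ^ 2 * h := by group
          rw [hdG _ hmem, hrw, hχmul _ (G.mul_mem (ha g hg) ha2) _ hh,
            hχmul _ (ha g hg) _ ha2, hsq, mul_one, hc g hg,
            hdaG _ hg, hdaG _ hh, hconj _ hg, Complex.conj_conj]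
end

section
/- Let M be a group, G ⊆ M a finite subgroup, a ∈ M with a g a⁻¹ ∈ G for all g ∈ G and a² ∈ G, and χ a one-dimensional unitary character of G. Then the following are equivalent: (1) Σ_{g ∈ G} χ((a g)²) = |G| and Σ_{g ∈ G} χ(g²) = 0; (2) χ(a g a⁻¹) = χ(g)⁻¹ for all g ∈ G, χ(a²) = 1, and there exists h ∈ G with χ(h) not real. -/
private lemma sum_unit_eq_card {ι : Type*} (s : Finset ι) (f : ι → ℂ)
    (h1 : ∀ i ∈ s, ‖f i‖ = 1) (hs : ∑ i ∈ s, f i = (s.card : ℂ)) :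
    ∀ i ∈ s, f i = 1 := by
  have hre : ∑ i ∈ s, (f i).re = (s.card : ℝ) := by
    have := congrArg Complex.re hs
    simpa [Complex.re_sum] using this
  have hle : ∀ i ∈ s, (f i).re ≤ 1 := by
    intro i hi
    calc (f i).re ≤ ‖f i‖ := Complex.re_le_norm _
    _ = 1 := h1 i hi
  have heq : ∀ i ∈ s, (f i).re = 1 := by
    have h2 : ∑ i ∈ s, (f i).re = ∑ i ∈ s, (1 : ℝ) := by
      simpa using hre
    exact (Finset.sum_eq_sum_iff_of_le hle).mp h2
  intro i hi
  have habs : ‖f i‖ = 1 := h1 i hi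
  have hnsq : Complex.normSq (f i) = 1 := by
    have := congrArg (·^2) habs
    simpa [Complex.sq_norm] using this
  have him : (f i).im = 0 := by
    rw [Complex.normSq_apply] at hnsq
    nlinarith [heq i hi]
  exact Complex.ext (heq i hi) him

/-- Specialization of the paper's Theorem 1 to one-dimensional representations: the
Wigner sum with respect to the magnetic group `G + aG` equals `|G|` (case (a)) and the
Wigner sum with respect to `G + KG` (pure time inversion) equals `0` (case (c)) if and
only if `χ(a g a⁻¹) = χ(g)⁻¹` for all `g ∈ G`, `χ(a²) = 1`, and `χ` takes some
non-real value on `G`. -/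
theorem theorem1_one_dim_characterization
    {M : Type*} [Group M] (G : Subgroup M) [Fintype G]
    (a : M) (ha : ∀ g ∈ G, a * g * a⁻¹ ∈ G) (ha2 : a ^ 2 ∈ G)
    (χ : M → ℂ)
    (hχmul : ∀ g ∈ G, ∀ h ∈ G, χ (g * h) = χ g * χ h)
    (hχabs : ∀ g ∈ G, ‖χ g‖ = 1) :
    (∑ g : G, χ ((a * (g : M)) ^ 2) = (Fintype.card G : ℂ) ∧
        ∑ g : G, χ (((g : M)) ^ 2) = 0) ↔
      ((∀ g ∈ G, χ (a * g * a⁻¹) = (χ g)⁻¹) ∧ χ (a ^ 2) = 1 ∧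
        ∃ h ∈ G, (χ h).im ≠ 0) := by
  have hconj' : ∀ g ∈ G, a⁻¹ * g * a ∈ G := by
    have hinj : Function.Injective (fun x : G => (⟨a * x * a⁻¹, ha x x.2⟩ : G)) := by
      intro x y hxy
      have h1 : a * (x : M) * a⁻¹ = a * (y : M) * a⁻¹ := congrArg Subtype.val hxy
      exact Subtype.ext (mul_left_cancel (mul_right_cancel h1))
    have hsurj := Finite.surjective_of_injective hinj
    intro g hg
    obtain ⟨x, hx⟩ := hsurj ⟨g, hg⟩
    have hx' : a * (x : M) * a⁻¹ = g := congrArg Subtype.val hx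
    have hg' : a⁻¹ * g * a = x := by rw [← hx']; group
    rw [hg']; exact x.2
  have hne : ∀ g ∈ G, χ g ≠ 0 := by
    intro g hg h0
    have := hχabs g hg
    rw [h0] at this; simp at this
  have hone : χ 1 = 1 := by
    have h := hχmul 1 G.one_mem 1 G.one_mem
    rw [mul_one] at h
    have h2 : χ 1 * 1 = χ 1 * χ 1 := by rw [mul_one]; exact h
    exact (mul_left_cancel₀ (hne 1 G.one_mem) h2).symm
  have hdecomp : ∀ g ∈ G, χ ((a * g) ^ 2) = χ (a ^ 2) * χ (a⁻¹ * g * a) * χ g := by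
    intro g hg
    have heq : (a * g) ^ 2 = (a ^ 2) * (a⁻¹ * g * a) * g := by
      rw [sq, sq]; group
    rw [heq, hχmul _ (G.mul_mem ha2 (hconj' g hg)) _ hg,
      hχmul _ ha2 _ (hconj' g hg)]
  constructor
  · rintro ⟨hA, hC⟩
    have hall : ∀ g : G, χ ((a * (g : M)) ^ 2) = 1 := by
      have := sum_unit_eq_card Finset.univ (fun g : G => χ ((a * (g : M)) ^ 2))
        (by
          intro g _
          show ‖χ ((a * (g : M)) ^ 2)‖ = 1
          rw [hdecomp g g.2]
          simp [map_mul, hχabs _ ha2, hχabs _ (hconj' g g.2), hχabs _ g.2])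
        (by simpa [Finset.card_univ] using hA)
      intro g; exact this g (Finset.mem_univ g)
    have ha2one : χ (a ^ 2) = 1 := by
      have h1 := hall ⟨1, G.one_mem⟩
      simp only at h1
      rw [hdecomp 1 G.one_mem, show a⁻¹ * 1 * a = (1:M) by group] at h1
      simpa [hone] using h1
    have hconjχ' : ∀ g ∈ G, χ (a⁻¹ * g * a) = (χ g)⁻¹ := by
      intro g hg
      have h1 := hall ⟨g, hg⟩
      simp only at h1
      rw [hdecomp g hg, ha2one, one_mul] at h1
      exact eq_inv_of_mul_eq_one_left h1
    have hconjχ : ∀ g ∈ G, χ (a * g * a⁻¹) = (χ g)⁻¹ := by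
      intro g hg
      have h1 := hconjχ' (a * g * a⁻¹) (ha g hg)
      rw [show a⁻¹ * (a * g * a⁻¹) * a = g by group] at h1
      rw [h1, inv_inv]
    refine ⟨hconjχ, ha2one, ?_⟩
    by_contra hno
    push_neg at hno
    have hsq1 : ∀ g : G, χ ((g : M) ^ 2) = 1 := by
      intro g
      have him := hno g g.2
      have habs := hχabs g g.2
      have hnsq : Complex.normSq (χ g) = 1 := by
        have := congrArg (·^2) habs
        simpa [Complex.sq_norm] using this
      rw [Complex.normSq_apply] at hnsq
      have hre : (χ (g : M)).re ^ 2 = 1 := by nlinarith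
      have hmm : χ ((g : M) ^ 2) = χ g * χ g := by
        rw [sq]; exact hχmul g g.2 g g.2
      have hz : (χ (g : M)) = ((χ (g : M)).re : ℂ) :=
        Complex.ext_iff.mpr ⟨rfl, by simp [him]⟩
      rw [hmm, hz, ← Complex.ofReal_mul, ← sq, hre, Complex.ofReal_one]
    rw [Finset.sum_congr rfl (fun g _ => hsq1 g)] at hC
    simp [Finset.card_univ] at hC
  · rintro ⟨hconjχ, ha2one, h, hh, him⟩
    have hconjχ' : ∀ g ∈ G, χ (a⁻¹ * g * a) = (χ g)⁻¹ := by
      intro g hg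
      have h1 := hconjχ (a⁻¹ * g * a) (hconj' g hg)
      rw [show a * (a⁻¹ * g * a) * a⁻¹ = g by group] at h1
      rw [h1, inv_inv]
    constructor
    · have hall : ∀ g : G, χ ((a * (g : M)) ^ 2) = 1 := by
        intro g
        rw [hdecomp g g.2, ha2one, one_mul, hconjχ' g g.2,
          inv_mul_cancel₀ (hne g g.2)]
      rw [Finset.sum_congr rfl (fun g _ => hall g)]
      simp [Finset.card_univ]
    · set S := ∑ g : G, χ (((g : M)) ^ 2) with hS
      have hsqχ : ∀ g : G, χ (((g : M)) ^ 2) = χ g * χ g := by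
        intro g; rw [sq]; exact hχmul g g.2 g g.2
      have hfrob : S = χ h * χ h * S := by
        calc S = ∑ g : G, χ ((((⟨h, hh⟩ : G) * g : G) : M) ^ 2) := by
                rw [hS, ← Equiv.sum_comp (Equiv.mulLeft (⟨h, hh⟩ : G))
                  (fun g : G => χ (((g : M)) ^ 2))]
                rfl
          _ = ∑ g : G, (χ h * χ g) * (χ h * χ g) := by
                refine Finset.sum_congr rfl (fun g _ => ?_)
                rw [hsqχ ((⟨h, hh⟩ : G) * g),
                  show (((⟨h, hh⟩ : G) * g : G) : M) = h * (g : M) from rfl,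
                  hχmul h hh g g.2]
          _ = χ h * χ h * S := by
                rw [hS, Finset.mul_sum]
                refine Finset.sum_congr rfl (fun g _ => ?_)
                rw [hsqχ g]; ring
      have hne1 : χ h * χ h ≠ 1 := by
        intro h1
        have hz : (χ h - 1) * (χ h + 1) = 0 := by linear_combination h1
        rcases mul_eq_zero.mp hz with h2 | h2
        · exact him (by rw [sub_eq_zero.mp h2]; simp)
        · have : χ h = -1 := by linear_combination h2
          exact him (by rw [this]; simp)
      have hz : (χ h * χ h - 1) * S = 0 := by linear_combination -hfrob
      rcases mul_eq_zero.mp hz with h2 | h2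
      · exact absurd (by linear_combination h2 : χ h * χ h = 1) hne1
      · exact h2
end
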